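/- arXiv:1807.05200 — 3 statements merged into one kernel-verified Lean document; each statement's English description precedes it below -/
import Mathlib

section
/- Let p ≥ 1 be an integer and let v₁, …, v_{2p+1} be unit vectors in ℝ², where v_h = (cos θ_h, sin θ_h) with θ₁ ≤ θ₂ ≤ … ≤ θ_{2p+1} and all θ_h satisfying |θ_h| ≤ φ for some φ < π/2. Then the norm of the sum ∑_{h=1}^{2p+1} v_h is strictly greater than 1. -/
open Real
open scoped RealInnerProductSpace

/-- An odd number `2p+1 ≥ 3` of unit vectors in the plane, with ordered angles all lying
in a wedge of half-opening `φ < π/2`, has a sum of norm strictly greater than `1`. -/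
theorem stmt_0 (p : ℕ) (hp : 1 ≤ p) (θ : Fin (2 * p + 1) → ℝ) (φ : ℝ)
    (hφ : φ < π / 2) (hbd : ∀ h, |θ h| ≤ φ) (hmono : Monotone θ)
    (v : Fin (2 * p + 1) → EuclideanSpace ℝ (Fin 2))
    (hv : ∀ h, v h = ![Real.cos (θ h), Real.sin (θ h)]) :
    1 < ‖∑ h, v h‖ := by
  have hφ0 : 0 ≤ φ := (abs_nonneg _).trans (hbd 0)
  have hn : p < 2 * p + 1 := by omega
  set m : Fin (2 * p + 1) := ⟨p, hn⟩ with hm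
  -- key pairing lemma
  have key : ∀ i j : Fin (2 * p + 1), (i : ℕ) ≤ p → p ≤ (j : ℕ) →
      0 < Real.cos (θ i - θ m) + Real.cos (θ j - θ m) := by
    intro i j hi hj
    have hbi := abs_le.1 (hbd i)
    have hbj := abs_le.1 (hbd j)
    have hbm := abs_le.1 (hbd m)
    have h1 : θ i ≤ θ m := hmono (show i ≤ m from by rwa [Fin.le_def])
    have h2 : θ m ≤ θ j := hmono (show m ≤ j from by rwa [Fin.le_def])
    rw [Real.cos_add_cos]
    have c1 : 0 < Real.cos ((θ i - θ m + (θ j - θ m)) / 2) := by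
      apply Real.cos_pos_of_mem_Ioo
      constructor
      · nlinarith [hbi.1, hbi.2, hbj.1, hbj.2, hbm.1, hbm.2]
      · nlinarith [hbi.1, hbi.2, hbj.1, hbj.2, hbm.1, hbm.2]
    have c2 : 0 < Real.cos ((θ i - θ m - (θ j - θ m)) / 2) := by
      apply Real.cos_pos_of_mem_Ioo
      constructor
      · nlinarith [hbi.1, hbi.2, hbj.1, hbj.2]
      · nlinarith [hbi.1, hbi.2, hbj.1, hbj.2]
    positivity
  -- extend θ to ℕ
  set Θ : ℕ → ℝ := fun h => θ ⟨h % (2 * p + 1), Nat.mod_lt _ (by omega)⟩ with hΘ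
  have hΘeq : ∀ h (hh : h < 2 * p + 1), Θ h = θ ⟨h, hh⟩ := by
    intro h hh
    simp only [hΘ]
    congr 1
    exact Fin.ext (Nat.mod_eq_of_lt hh)
  set f : ℕ → ℝ := fun h => Real.cos (Θ h - θ m) with hf
  have hS : (∑ h : Fin (2 * p + 1), Real.cos (θ h - θ m)) = ∑ h ∈ Finset.range (2 * p + 1), f h := by
    rw [← Fin.sum_univ_eq_sum_range]
    apply Finset.sum_congr rfl
    intro i _
    simp only [hf]
    rw [hΘeq i.1 i.2]
  -- the sum of cosines exceeds 1
  have hsum : 1 < ∑ h : Fin (2 * p + 1), Real.cos (θ h - θ m) := by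
    rw [hS]
    have hrefl : (∑ h ∈ Finset.range (2 * p + 1), f h)
        = ∑ h ∈ Finset.range (2 * p + 1), f (2 * p + 1 - 1 - h) :=
      (Finset.sum_range_reflect f (2 * p + 1)).symm
    have h2S : 2 * (∑ h ∈ Finset.range (2 * p + 1), f h)
        = ∑ h ∈ Finset.range (2 * p + 1), (f h + f (2 * p - h)) := by
      have hr2 : ∑ h ∈ Finset.range (2 * p + 1), f (2 * p - h)
          = ∑ h ∈ Finset.range (2 * p + 1), f h := by
        rw [← Finset.sum_range_reflect f (2 * p + 1)]
        apply Finset.sum_congr rfl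
        intro h hh
        simp only [Finset.mem_range] at hh
        rw [show 2 * p + 1 - 1 - h = 2 * p - h from by omega]
      rw [Finset.sum_add_distrib, hr2, two_mul]
    have hFpos : ∀ h ∈ Finset.range (2 * p + 1), 0 < f h + f (2 * p - h) := by
      intro h hh
      simp only [Finset.mem_range] at hh
      have hh2 : 2 * p - h < 2 * p + 1 := by omega
      have hhlt : h < 2 * p + 1 := hh
      simp only [hf]
      rw [hΘeq h hhlt, hΘeq (2 * p - h) hh2]
      rcases le_or_gt h p with hle | hgt
      · exact key ⟨h, hhlt⟩ ⟨2 * p - h, hh2⟩ hle (by simp; omega)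
      · rw [add_comm]
        exact key ⟨2 * p - h, hh2⟩ ⟨h, hhlt⟩ (by simp; omega) (le_of_lt hgt)
    have hFp : f p + f (2 * p - p) = 2 := by
      simp only [hf]
      have : 2 * p - p = p := by omega
      rw [this, hΘeq p hn]
      simp only [hm]
      norm_num
    have hsplit : ∑ h ∈ Finset.range (2 * p + 1), (f h + f (2 * p - h))
        = (f p + f (2 * p - p)) + ∑ h ∈ (Finset.range (2 * p + 1)).erase p, (f h + f (2 * p - h)) := by
      exact (Finset.add_sum_erase _ _ (Finset.mem_range.2 hn)).symm
    have hpos : 0 < ∑ h ∈ (Finset.range (2 * p + 1)).erase p, (f h + f (2 * p - h)) := by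
      apply Finset.sum_pos
      · intro i hi
        exact hFpos i (Finset.mem_of_mem_erase hi)
      · exact ⟨0, Finset.mem_erase.2 ⟨by omega, Finset.mem_range.2 (by omega)⟩⟩
    nlinarith [h2S, hsplit, hFp, hpos]
  -- norm bound via inner product with v m
  have hnormm : ‖v m‖ = 1 := by
    rw [EuclideanSpace.norm_eq, hv m]
    simp only [Fin.sum_univ_two, Matrix.cons_val_zero, Matrix.cons_val_one, Matrix.head_cons,
      Real.norm_eq_abs, sq_abs]
    rw [Real.cos_sq_add_sin_sq, Real.sqrt_one]
  have hinner : (inner ℝ (∑ h, v h) (v m) : ℝ) = ∑ h : Fin (2 * p + 1), Real.cos (θ h - θ m) := by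
    rw [sum_inner]
    apply Finset.sum_congr rfl
    intro i _
    simp [hv i, hv m, PiLp.inner_apply, Fin.sum_univ_two, RCLike.inner_apply, Real.cos_sub]
    ring
  have hle : (inner ℝ (∑ h, v h) (v m) : ℝ) ≤ ‖∑ h, v h‖ := by
    calc (inner ℝ (∑ h, v h) (v m) : ℝ) ≤ ‖∑ h, v h‖ * ‖v m‖ := real_inner_le_norm _ _
      _ = ‖∑ h, v h‖ := by rw [hnormm, mul_one]
  linarith [hsum, hinner ▸ hle]
end

section
/- Let p ≥ 1, let θ₁ ≤ … ≤ θ_{2p+1} be real numbers in [−φ, φ] with φ < π/2, and set v_h = (cos θ_h, sin θ_h) ∈ ℝ². For each j ≤ p set w_j := v_j + v_{2p+2−j}. Then the inner product w_j · v_{p+1} > 0 whenever w_j ≠ 0, and in fact w_j · v_{p+1} = 2 cos((θ_{2p+2−j} − θ_j)/2) cos(θ_{p+1} − (θ_j + θ_{2p+2−j})/2) ≥ 0, with the estimate |∑_{h=1}^{2p+1} v_h| ≥ (∑ v_h) · v_{p+1} = ∑_{j=1}^p w_j · v_{p+1} + 1 > 1. -/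
open Real Finset
open scoped RealInnerProductSpace

/-- Key wedge estimate: for ordered angles `θ₁ ≤ … ≤ θ_{2p+1}` in `[-φ, φ]`, `φ < π/2`,
and `v_h = (cos θ_h, sin θ_h)`, setting `w_j = v_j + v_{2p+2-j}` one has
`w_j ⬝ v_{p+1} = 2 cos((θ_{2p+2-j} - θ_j)/2) cos(θ_{p+1} - (θ_j + θ_{2p+2-j})/2) ≥ 0`,
strictly positive when `w_j ≠ 0`, and
`‖∑ v_h‖ ≥ (∑ v_h) ⬝ v_{p+1} = ∑_j w_j ⬝ v_{p+1} + 1 > 1`. -/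
theorem stmt_2 (p : ℕ) (hp : 1 ≤ p) (θ : ℕ → ℝ) (φ : ℝ) (hφ : φ < π / 2)
    (hmono : ∀ h h', 1 ≤ h → h ≤ h' → h' ≤ 2 * p + 1 → θ h ≤ θ h')
    (hbd : ∀ h ∈ Icc 1 (2 * p + 1), |θ h| ≤ φ)
    (v : ℕ → EuclideanSpace ℝ (Fin 2))
    (hv : ∀ h, v h = ![Real.cos (θ h), Real.sin (θ h)])
    (w : ℕ → EuclideanSpace ℝ (Fin 2))
    (hw : ∀ j, w j = v j + v (2 * p + 2 - j)) :
    (∀ j, 1 ≤ j → j ≤ p →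
      ⟪w j, v (p + 1)⟫ =
        2 * Real.cos ((θ (2 * p + 2 - j) - θ j) / 2) *
          Real.cos (θ (p + 1) - (θ j + θ (2 * p + 2 - j)) / 2) ∧
      0 ≤ ⟪w j, v (p + 1)⟫ ∧ (w j ≠ 0 → 0 < ⟪w j, v (p + 1)⟫)) ∧
    ⟪∑ h ∈ Icc 1 (2 * p + 1), v h, v (p + 1)⟫ =
      (∑ j ∈ Icc 1 p, ⟪w j, v (p + 1)⟫) + 1 ∧
    ⟪∑ h ∈ Icc 1 (2 * p + 1), v h, v (p + 1)⟫ ≤ ‖∑ h ∈ Icc 1 (2 * p + 1), v h‖ ∧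
    1 < ‖∑ h ∈ Icc 1 (2 * p + 1), v h‖ := by
  have hvv : ∀ a b, ⟪v a, v b⟫ = Real.cos (θ a - θ b) := by
    intro a b
    simp only [PiLp.inner_apply, RCLike.inner_apply, conj_trivial, Fin.sum_univ_two]
    rw [hv a, hv b]
    simp only [Matrix.cons_val_zero, Matrix.cons_val_one, Matrix.head_cons]
    rw [Real.cos_sub]; ring
  have hπ : 0 < π / 2 := by positivity
  -- per-j facts
  have hkey : ∀ j, 1 ≤ j → j ≤ p →
      ⟪w j, v (p + 1)⟫ =
        2 * Real.cos ((θ (2 * p + 2 - j) - θ j) / 2) *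
          Real.cos (θ (p + 1) - (θ j + θ (2 * p + 2 - j)) / 2) ∧
      0 < ⟪w j, v (p + 1)⟫ := by
    intro j hj1 hjp
    set k := 2 * p + 2 - j with hk
    have hk1 : p + 2 ≤ k := by omega
    have hk2 : k ≤ 2 * p + 1 := by omega
    have hjθ : θ j ≤ θ (p + 1) := hmono j (p + 1) hj1 (by omega) (by omega)
    have hkθ : θ (p + 1) ≤ θ k := hmono (p + 1) k (by omega) (by omega) hk2
    have hbj := abs_le.mp (hbd j (by simp [Finset.mem_Icc]; omega))
    have hbk := abs_le.mp (hbd k (by simp [Finset.mem_Icc]; omega))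
    have heq : ⟪w j, v (p + 1)⟫ =
        2 * Real.cos ((θ k - θ j) / 2) *
          Real.cos (θ (p + 1) - (θ j + θ k) / 2) := by
      rw [hw j, inner_add_left, hvv, hvv, ← hk]
      have h1 : (θ k - θ j) / 2 =
          -((θ j - θ (p + 1) - (θ k - θ (p + 1))) / 2) := by ring
      have h2 : θ (p + 1) - (θ j + θ k) / 2 =
          -((θ j - θ (p + 1) + (θ k - θ (p + 1))) / 2) := by ring
      rw [h1, h2, Real.cos_neg, Real.cos_neg, Real.cos_add_cos]; ring
    have hc1 : 0 < Real.cos ((θ k - θ j) / 2) :=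
      Real.cos_pos_of_mem_Ioo ⟨by linarith, by linarith⟩
    have hc2 : 0 < Real.cos (θ (p + 1) - (θ j + θ k) / 2) :=
      Real.cos_pos_of_mem_Ioo ⟨by linarith, by linarith⟩
    exact ⟨heq, by rw [heq]; positivity⟩
  -- sum decomposition
  have hset : Icc 1 (2 * p + 1) = Icc 1 p ∪ Icc (p + 1) (2 * p + 1) := by
    ext x; simp [Finset.mem_Icc]; omega
  have hdisj : Disjoint (Icc 1 p) (Icc (p + 1) (2 * p + 1)) := by
    rw [Finset.disjoint_left]
    intro x hx hx'
    simp [Finset.mem_Icc] at hx hx'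
    omega
  have hset2 : Icc (p + 1) (2 * p + 1) = insert (p + 1) (Icc (p + 2) (2 * p + 1)) := by
    ext x; simp [Finset.mem_Icc]; omega
  have hre : ∑ j ∈ Icc 1 p, v (2 * p + 2 - j) = ∑ h ∈ Icc (p + 2) (2 * p + 1), v h := by
    apply Finset.sum_nbij' (fun j => 2 * p + 2 - j) (fun h => 2 * p + 2 - h)
    · intro a ha; simp [Finset.mem_Icc] at *; omega
    · intro a ha; simp [Finset.mem_Icc] at *; omega
    · intro a ha; simp [Finset.mem_Icc] at *; omega
    · intro a ha; simp [Finset.mem_Icc] at *; omega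
    · intro a ha; rfl
  have hsum : (∑ h ∈ Icc 1 (2 * p + 1), v h) = (∑ j ∈ Icc 1 p, w j) + v (p + 1) := by
    rw [hset, Finset.sum_union hdisj, hset2,
      Finset.sum_insert (by simp [Finset.mem_Icc]), ← hre]
    have : ∑ j ∈ Icc 1 p, w j =
        (∑ j ∈ Icc 1 p, v j) + ∑ j ∈ Icc 1 p, v (2 * p + 2 - j) := by
      rw [← Finset.sum_add_distrib]
      exact Finset.sum_congr rfl fun j _ => hw j
    rw [this]; abel
  have hone : ⟪v (p + 1), v (p + 1)⟫ = 1 := by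
    rw [hvv, sub_self, Real.cos_zero]
  have hinner : ⟪∑ h ∈ Icc 1 (2 * p + 1), v h, v (p + 1)⟫ =
      (∑ j ∈ Icc 1 p, ⟪w j, v (p + 1)⟫) + 1 := by
    rw [hsum, inner_add_left, sum_inner, hone]
  have hnorm1 : ‖v (p + 1)‖ = 1 := by
    have h := real_inner_self_eq_norm_sq (v (p + 1))
    rw [hone] at h
    nlinarith [norm_nonneg (v (p + 1))]
  have hCS : ⟪∑ h ∈ Icc 1 (2 * p + 1), v h, v (p + 1)⟫ ≤
      ‖∑ h ∈ Icc 1 (2 * p + 1), v h‖ := by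
    calc ⟪∑ h ∈ Icc 1 (2 * p + 1), v h, v (p + 1)⟫
        ≤ ‖∑ h ∈ Icc 1 (2 * p + 1), v h‖ * ‖v (p + 1)‖ := real_inner_le_norm _ _
      _ = ‖∑ h ∈ Icc 1 (2 * p + 1), v h‖ := by rw [hnorm1, mul_one]
  have hpos : 0 < ∑ j ∈ Icc 1 p, ⟪w j, v (p + 1)⟫ := by
    apply Finset.sum_pos
    · intro j hj
      simp [Finset.mem_Icc] at hj
      exact (hkey j hj.1 hj.2).2
    · exact ⟨1, by simp [Finset.mem_Icc, hp]⟩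
  refine ⟨fun j hj1 hjp => ?_, hinner, hCS, ?_⟩
  · obtain ⟨heq, hpos'⟩ := hkey j hj1 hjp
    exact ⟨heq, le_of_lt hpos', fun _ => hpos'⟩
  · calc (1 : ℝ) < (∑ j ∈ Icc 1 p, ⟪w j, v (p + 1)⟫) + 1 := by linarith
      _ = ⟪∑ h ∈ Icc 1 (2 * p + 1), v h, v (p + 1)⟫ := hinner.symm
      _ ≤ ‖∑ h ∈ Icc 1 (2 * p + 1), v h‖ := hCS
end

section
/- Let N ⊂ ℝⁿ be a bounded open set with smooth boundary, let ε ∈ (0, 1/√3), and let u : N → ℝ be Lipschitz with u = 0 on ∂N and Lip(u) ≤ ε. Define the area excess A(u) := ∫_N (√(1 + |∇u|²) − 1) dx and the deficit δ(u) := sup { ∫_N (∇u/√(1+|∇u|²)) · ∇φ dx : φ ∈ H¹₀(N), ∫_N |∇φ|² ≤ 1 }. Then (1/3 − ε²)² ∫_N |∇u|² ≤ δ(u)², and (1/3 − ε²) A(u) ≤ δ(u)². -/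
open Real MeasureTheory
open scoped RealInnerProductSpace

set_option maxHeartbeats 1000000 in
/-- Flat-case sharp stability estimate: for a Lipschitz function `u` on a bounded open
set `N ⊂ ℝⁿ` vanishing outside `N`, with `Lip(u) ≤ ε < 1/√3`, the area excess
`A(u) = ∫_N (√(1+|∇u|²) - 1)` and the Dirichlet energy `∫_N |∇u|²` are controlled by
the square of the duality deficit
`δ(u) = sup { ∫_N ∇u/√(1+|∇u|²) ⬝ ∇φ : φ ∈ H¹₀(N), ∫_N |∇φ|² ≤ 1 }`:
namely `(1/3 - ε²)² ∫_N |∇u|² ≤ δ(u)²` and `(1/3 - ε²) A(u) ≤ δ(u)²`. -/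
theorem stmt_9 (n : ℕ) (N : Set (EuclideanSpace ℝ (Fin n)))
    (hNopen : IsOpen N) (hNbdd : Bornology.IsBounded N)
    (ε : ℝ) (hε : ε ∈ Set.Ioo 0 (1 / Real.sqrt 3))
    (u : EuclideanSpace ℝ (Fin n) → ℝ)
    (hu : Differentiable ℝ u) (hu0 : ∀ x ∉ N, u x = 0)
    (hLip : ∀ x, ‖gradient u x‖ ≤ ε)
    (A δ : ℝ)
    (hA : A = ∫ x in N, (Real.sqrt (1 + ‖gradient u x‖ ^ 2) - 1))
    (hδ : δ = sSup { r : ℝ | ∃ φ : EuclideanSpace ℝ (Fin n) → ℝ,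
      Differentiable ℝ φ ∧ (∀ x ∉ N, φ x = 0) ∧ (∃ K : NNReal, LipschitzWith K φ) ∧
      (∫ x in N, ‖gradient φ x‖ ^ 2) ≤ 1 ∧
      r = ∫ x in N,
        ⟪(Real.sqrt (1 + ‖gradient u x‖ ^ 2))⁻¹ • gradient u x, gradient φ x⟫ }) :
    (1 / 3 - ε ^ 2) ^ 2 * (∫ x in N, ‖gradient u x‖ ^ 2) ≤ δ ^ 2 ∧
      (1 / 3 - ε ^ 2) * A ≤ δ ^ 2 := by
  obtain ⟨hε0, hε1⟩ := hε
  have hε2 : ε ^ 2 < 1 / 3 := by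
    have h1 : ε ^ 2 < (1 / Real.sqrt 3) ^ 2 := by
      apply pow_lt_pow_left₀ hε1 hε0.le; norm_num
    have h2 : (Real.sqrt 3) ^ 2 = 3 := Real.sq_sqrt (by norm_num)
    rw [div_pow, one_pow, h2] at h1
    exact h1
  set S : Set ℝ := { r : ℝ | ∃ φ : EuclideanSpace ℝ (Fin n) → ℝ,
      Differentiable ℝ φ ∧ (∀ x ∉ N, φ x = 0) ∧ (∃ K : NNReal, LipschitzWith K φ) ∧
      (∫ x in N, ‖gradient φ x‖ ^ 2) ≤ 1 ∧
      r = ∫ x in N,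
        ⟪(Real.sqrt (1 + ‖gradient u x‖ ^ 2))⁻¹ • gradient u x, gradient φ x⟫ } with hS
  set E : ℝ := ∫ x in N, ‖gradient u x‖ ^ 2 with hE
  have hmeasN : MeasurableSet N := hNopen.measurableSet
  have hμN : volume N ≠ ⊤ := hNbdd.measure_lt_top.ne
  have hgradmeas : ∀ (f : EuclideanSpace ℝ (Fin n) → ℝ), Measurable (gradient f) := by
    intro f
    exact (InnerProductSpace.toDual ℝ (EuclideanSpace ℝ (Fin n))).symm.continuous.measurable.comp
      (measurable_fderiv ℝ f)
  have hnormgrad : ∀ (f : EuclideanSpace ℝ (Fin n) → ℝ) x, ‖gradient f x‖ = ‖fderiv ℝ f x‖ := by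
    intro f x; simp [gradient]
  have hsqrt1 : ∀ x : EuclideanSpace ℝ (Fin n),
      (1:ℝ) ≤ Real.sqrt (1 + ‖gradient u x‖ ^ 2) := by
    intro x
    exact Real.one_le_sqrt.2 (by nlinarith [sq_nonneg ‖gradient u x‖])
  have hwnorm : ∀ x : EuclideanSpace ℝ (Fin n),
      ‖(Real.sqrt (1 + ‖gradient u x‖ ^ 2))⁻¹ • gradient u x‖ ≤ ε := by
    intro x
    rw [norm_smul, Real.norm_eq_abs]
    have h0 := norm_nonneg (gradient u x)
    have hle := hLip x
    have h3 : |(Real.sqrt (1 + ‖gradient u x‖ ^ 2))⁻¹| ≤ 1 := by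
      rw [abs_of_nonneg (by positivity), inv_le_one_iff₀]; right; exact hsqrt1 x
    nlinarith [abs_nonneg ((Real.sqrt (1 + ‖gradient u x‖ ^ 2))⁻¹)]
  -- integrability of basic integrands
  have hI1 : IntegrableOn (fun x => ‖gradient u x‖ ^ 2) N volume := by
    apply Measure.integrableOn_of_bounded (M := ε ^ 2) hμN
      (((hgradmeas u).norm.pow_const 2).aestronglyMeasurable)
    filter_upwards with x
    have := hLip x
    have h0 := norm_nonneg (gradient u x)
    rw [Real.norm_eq_abs, abs_of_nonneg (by positivity)]
    nlinarith
  have hE0 : 0 ≤ E := by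
    rw [hE]; exact setIntegral_nonneg hmeasN fun x _ => by positivity
  have hI2 : IntegrableOn (fun x => Real.sqrt (1 + ‖gradient u x‖ ^ 2) - 1) N volume := by
    apply Measure.integrableOn_of_bounded (M := Real.sqrt (1 + ε ^ 2)) hμN
      ((((measurable_const.add ((hgradmeas u).norm.pow_const 2)).sqrt).sub
        measurable_const).aestronglyMeasurable)
    filter_upwards with x
    have h0 := norm_nonneg (gradient u x)
    have hle := hLip x
    have h1 := hsqrt1 x
    have h2 : Real.sqrt (1 + ‖gradient u x‖ ^ 2) ≤ Real.sqrt (1 + ε ^ 2) :=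
      Real.sqrt_le_sqrt (by nlinarith)
    show ‖Real.sqrt (1 + ‖gradient u x‖ ^ 2) - 1‖ ≤ Real.sqrt (1 + ε ^ 2)
    rw [Real.norm_eq_abs, abs_of_nonneg (by linarith)]
    linarith [Real.sqrt_nonneg (1 + ε ^ 2)]
  have hI3 : IntegrableOn
      (fun x => (Real.sqrt (1 + ‖gradient u x‖ ^ 2))⁻¹ * ‖gradient u x‖ ^ 2) N volume := by
    apply Measure.integrableOn_of_bounded (M := ε ^ 2) hμN
      ((((measurable_const.add ((hgradmeas u).norm.pow_const 2)).sqrt).inv.mul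
        ((hgradmeas u).norm.pow_const 2)).aestronglyMeasurable)
    filter_upwards with x
    have h0 := norm_nonneg (gradient u x)
    have hle := hLip x
    have h2 : (Real.sqrt (1 + ‖gradient u x‖ ^ 2))⁻¹ ≤ 1 := by
      rw [inv_le_one_iff₀]; right; exact hsqrt1 x
    have h3 : 0 ≤ (Real.sqrt (1 + ‖gradient u x‖ ^ 2))⁻¹ := by positivity
    show ‖(Real.sqrt (1 + ‖gradient u x‖ ^ 2))⁻¹ * ‖gradient u x‖ ^ 2‖ ≤ ε ^ 2
    rw [Real.norm_eq_abs, abs_of_nonneg (by positivity)]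
    nlinarith
  -- upper bound for all elements of S
  have hbound : ∀ r ∈ S, r ≤ ε / 2 * (volume N).toReal + ε / 2 := by
    rintro r ⟨φ, hφd, -, ⟨K, hφK⟩, hφ1, rfl⟩
    have hφgb : ∀ x, ‖gradient φ x‖ ≤ K := fun x => by
      rw [hnormgrad]; exact norm_fderiv_le_of_lipschitz ℝ hφK
    have hIφ : IntegrableOn (fun x => ‖gradient φ x‖ ^ 2) N volume := by
      apply Measure.integrableOn_of_bounded (M := (K : ℝ) ^ 2) hμN
        (((hgradmeas φ).norm.pow_const 2).aestronglyMeasurable)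
      filter_upwards with x
      have := hφgb x
      have h0 := norm_nonneg (gradient φ x)
      rw [Real.norm_eq_abs, abs_of_nonneg (by positivity)]
      nlinarith
    have hIinner : IntegrableOn
        (fun x => ⟪(Real.sqrt (1 + ‖gradient u x‖ ^ 2))⁻¹ • gradient u x, gradient φ x⟫)
        N volume := by
      apply Measure.integrableOn_of_bounded (M := ε * K) hμN
        ((((((measurable_const.add ((hgradmeas u).norm.pow_const 2)).sqrt).inv).smul
          (hgradmeas u)).inner (hgradmeas φ)).aestronglyMeasurable)
      filter_upwards with x
      have h1 := abs_real_inner_le_norm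
        ((Real.sqrt (1 + ‖gradient u x‖ ^ 2))⁻¹ • gradient u x) (gradient φ x)
      rw [Real.norm_eq_abs]
      calc |⟪(Real.sqrt (1 + ‖gradient u x‖ ^ 2))⁻¹ • gradient u x, gradient φ x⟫|
          ≤ ‖(Real.sqrt (1 + ‖gradient u x‖ ^ 2))⁻¹ • gradient u x‖ * ‖gradient φ x‖ := h1
        _ ≤ ε * K := mul_le_mul (hwnorm x) (hφgb x) (norm_nonneg _) hε0.le
    calc (∫ x in N, ⟪(Real.sqrt (1 + ‖gradient u x‖ ^ 2))⁻¹ • gradient u x, gradient φ x⟫)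
        ≤ ∫ x in N, (ε / 2 + ε / 2 * ‖gradient φ x‖ ^ 2) := by
          apply setIntegral_mono_on hIinner
            ((integrableOn_const hμN).add (hIφ.const_mul (ε / 2))) hmeasN
          intro x _
          have h1 := real_inner_le_norm
            ((Real.sqrt (1 + ‖gradient u x‖ ^ 2))⁻¹ • gradient u x) (gradient φ x)
          have h2 := hwnorm x
          have h4 := norm_nonneg (gradient φ x)
          have h5 := norm_nonneg ((Real.sqrt (1 + ‖gradient u x‖ ^ 2))⁻¹ • gradient u x)
          simp only [Pi.add_apply]
          nlinarith [mul_le_mul_of_nonneg_right h2 h4,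
            mul_nonneg hε0.le (sq_nonneg (‖gradient φ x‖ - 1))]
      _ = ε / 2 * (volume N).toReal + ε / 2 * ∫ x in N, ‖gradient φ x‖ ^ 2 := by
          rw [integral_add (integrableOn_const hμN : IntegrableOn (fun _ => ε / 2) N volume) (hIφ.const_mul (ε / 2)),
            setIntegral_const, integral_const_mul, smul_eq_mul, mul_comm, Measure.real]
      _ ≤ ε / 2 * (volume N).toReal + ε / 2 := by
          have : ε / 2 * ∫ x in N, ‖gradient φ x‖ ^ 2 ≤ ε / 2 * 1 :=
            mul_le_mul_of_nonneg_left hφ1 (by positivity)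
          linarith
  have hBdd : BddAbove S := ⟨ε / 2 * (volume N).toReal + ε / 2, hbound⟩
  have h0mem : (0 : ℝ) ∈ S := by
    refine ⟨fun _ => 0, differentiable_const 0, fun x _ => rfl,
      ⟨0, LipschitzWith.const 0⟩, ?_, ?_⟩
    · simp [gradient_const]
    · simp [gradient_const]
  have hδ0 : 0 ≤ δ := hδ ▸ le_csSup hBdd h0mem
  -- A ≤ E / 2
  have hAE : A ≤ E / 2 := by
    rw [hA, hE, div_eq_inv_mul, ← integral_const_mul]
    apply setIntegral_mono_on hI2 (hI1.const_mul 2⁻¹) hmeasN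
    intro x _
    have h0 := Real.sq_sqrt (show (0:ℝ) ≤ 1 + ‖gradient u x‖ ^ 2 by positivity)
    have h1 := Real.sqrt_nonneg (1 + ‖gradient u x‖ ^ 2)
    nlinarith [sq_nonneg (Real.sqrt (1 + ‖gradient u x‖ ^ 2) - 1)]
  -- key estimate
  have hkey : E ≤ (1 + ε ^ 2) * δ ^ 2 := by
    rcases eq_or_lt_of_le hE0 with h | hEpos
    · nlinarith [sq_nonneg δ, sq_nonneg ε]
    · set c : ℝ := (Real.sqrt E)⁻¹ with hc
      have hsE : 0 < Real.sqrt E := Real.sqrt_pos.2 hEpos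
      have hc0 : 0 < c := by positivity
      set φ : EuclideanSpace ℝ (Fin n) → ℝ := fun x => c * u x with hφ
      have hφd : Differentiable ℝ φ := hu.const_mul c
      have hgradφ : ∀ x, gradient φ x = c • gradient u x := by
        intro x; simp [hφ, gradient, fderiv_const_mul (hu x) c, _root_.map_smul]
      have huLip : LipschitzWith ⟨ε, hε0.le⟩ u := by
        apply lipschitzWith_of_nnnorm_fderiv_le hu
        intro x
        apply NNReal.coe_le_coe.mp
        show ((‖fderiv ℝ u x‖₊ : NNReal) : ℝ) ≤ ε
        simpa [← hnormgrad] using hLip x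
      have hφLip : LipschitzWith (‖c‖₊ * ⟨ε, hε0.le⟩) φ := by
        have := (lipschitzWith_smul (β := ℝ) c).comp huLip
        exact this
      have hφint : (∫ x in N, ‖gradient φ x‖ ^ 2) = 1 := by
        have h1 : (∫ x in N, ‖gradient φ x‖ ^ 2) = c ^ 2 * E := by
          rw [hE, ← integral_const_mul]
          apply setIntegral_congr_fun hmeasN
          intro x _
          simp only [hgradφ, norm_smul, mul_pow, Real.norm_eq_abs, sq_abs]
        have h2 : c ^ 2 = E⁻¹ := by
          rw [hc, inv_pow, Real.sq_sqrt hE0]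
        rw [h1, h2, inv_mul_cancel₀ (ne_of_gt hEpos)]
      set r0 : ℝ := ∫ x in N,
        ⟪(Real.sqrt (1 + ‖gradient u x‖ ^ 2))⁻¹ • gradient u x, gradient φ x⟫ with hr0
      have hmem : r0 ∈ S :=
        ⟨φ, hφd, fun x hx => by simp [hφ, hu0 x hx], ⟨_, hφLip⟩, le_of_eq hφint, rfl⟩
      have hδr : r0 ≤ δ := hδ ▸ le_csSup hBdd hmem
      have hr0eq : r0 = c * ∫ x in N,
          (Real.sqrt (1 + ‖gradient u x‖ ^ 2))⁻¹ * ‖gradient u x‖ ^ 2 := by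
        rw [hr0, ← integral_const_mul]
        apply setIntegral_congr_fun hmeasN
        intro x _
        simp only [hgradφ, real_inner_smul_right, real_inner_smul_left,
          real_inner_self_eq_norm_sq]
        try ring
      have hlow : (Real.sqrt (1 + ε ^ 2))⁻¹ * E ≤
          ∫ x in N, (Real.sqrt (1 + ‖gradient u x‖ ^ 2))⁻¹ * ‖gradient u x‖ ^ 2 := by
        rw [hE, ← integral_const_mul]
        apply setIntegral_mono_on (hI1.const_mul _) hI3 hmeasN
        intro x _
        have h0 := norm_nonneg (gradient u x)
        have hle := hLip x
        have hmono : Real.sqrt (1 + ‖gradient u x‖ ^ 2) ≤ Real.sqrt (1 + ε ^ 2) :=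
          Real.sqrt_le_sqrt (by nlinarith)
        have hpos : 0 < Real.sqrt (1 + ‖gradient u x‖ ^ 2) := lt_of_lt_of_le one_pos (hsqrt1 x)
        have hinv : (Real.sqrt (1 + ε ^ 2))⁻¹ ≤ (Real.sqrt (1 + ‖gradient u x‖ ^ 2))⁻¹ :=
          inv_anti₀ hpos hmono
        exact mul_le_mul_of_nonneg_right hinv (by positivity)
      have hsε : 0 < Real.sqrt (1 + ε ^ 2) := Real.sqrt_pos.2 (by positivity)
      have hr0low : (Real.sqrt (1 + ε ^ 2))⁻¹ * Real.sqrt E ≤ r0 := by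
        rw [hr0eq]
        have hcE : c * E = Real.sqrt E := by rw [hc, inv_mul_eq_div, Real.div_sqrt]
        calc (Real.sqrt (1 + ε ^ 2))⁻¹ * Real.sqrt E
            = c * ((Real.sqrt (1 + ε ^ 2))⁻¹ * E) := by rw [← hcE]; ring
          _ ≤ c * ∫ x in N, (Real.sqrt (1 + ‖gradient u x‖ ^ 2))⁻¹ * ‖gradient u x‖ ^ 2 :=
              mul_le_mul_of_nonneg_left hlow hc0.le
      have hδlow : (Real.sqrt (1 + ε ^ 2))⁻¹ * Real.sqrt E ≤ δ := le_trans hr0low hδr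
      have hnn : 0 ≤ (Real.sqrt (1 + ε ^ 2))⁻¹ * Real.sqrt E := by positivity
      have hsq : ((Real.sqrt (1 + ε ^ 2))⁻¹ * Real.sqrt E) ^ 2 ≤ δ ^ 2 :=
        pow_le_pow_left₀ hnn hδlow 2
      have hsqeq : ((Real.sqrt (1 + ε ^ 2))⁻¹ * Real.sqrt E) ^ 2 = (1 + ε ^ 2)⁻¹ * E := by
        rw [mul_pow, inv_pow, Real.sq_sqrt (by positivity : (0:ℝ) ≤ 1 + ε ^ 2),
          Real.sq_sqrt hE0]
      rw [hsqeq] at hsq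
      have := mul_le_mul_of_nonneg_left hsq (by positivity : (0:ℝ) ≤ 1 + ε ^ 2)
      rw [← mul_assoc, mul_inv_cancel₀ (by positivity : (1:ℝ) + ε ^ 2 ≠ 0), one_mul] at this
      exact this
  -- conclude
  have h9 : (1 / 3 - ε ^ 2) ^ 2 ≤ 1 / 9 := by nlinarith [sq_nonneg ε]
  have h9E : (1 / 3 - ε ^ 2) ^ 2 * E ≤ 1 / 9 * E := mul_le_mul_of_nonneg_right h9 hE0
  have h43 : (1 + ε ^ 2) * δ ^ 2 ≤ 4 / 3 * δ ^ 2 := by nlinarith [sq_nonneg δ]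
  have hfinal1 : (1 / 3 - ε ^ 2) ^ 2 * E ≤ δ ^ 2 := by nlinarith [sq_nonneg δ]
  have hfinal2 : (1 / 3 - ε ^ 2) * A ≤ δ ^ 2 := by
    have h4 : (1 / 3 - ε ^ 2) * A ≤ (1 / 3 - ε ^ 2) * (E / 2) :=
      mul_le_mul_of_nonneg_left hAE (by linarith)
    nlinarith [sq_nonneg δ, mul_nonneg hE0 (sq_nonneg ε)]
  exact ⟨hfinal1, hfinal2⟩
end
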